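/- Let A ∈ ℤ^{d×n} be of rank d. The toric Jacobian det J_{A,b}(v), regarded as a Laurent polynomial in the variables β ∈ (ℂ*)ⁿ and v ∈ (ℂ*)^d, is not identically zero; in particular, for v = (1,…,1) and β = (−i,…,−i) it equals det(−i·A·Aᵀ) ≠ 0. Moreover, for generic β ∈ (ℂ*)ⁿ and generic ω ∈ ℂ^d, the system A·ψ_{A,b}(v) = ω has only finitely many solutions v ∈ (ℂ*)^d, i.e. the fiber pr_ω^{−1}(ω) of the projection pr_ω : W_{A,b} → ℂ^d is finite. -/

import Mathlib

noncomputable section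


/-- A subset of `ℂⁿ` is Zariski closed if it is the common zero locus
of a set of polynomials. -/
def ZClosed {n : ℕ} (S : Set (Fin n → ℂ)) : Prop :=
  ∃ I : Set (MvPolynomial (Fin n) ℂ),
    S = {x | ∀ p ∈ I, MvPolynomial.eval x p = 0}

/-- Irreducibility with respect to the Zariski topology on `ℂⁿ`. -/
def ZIrred {n : ℕ} (S : Set (Fin n → ℂ)) : Prop :=
  S.Nonempty ∧ ∀ F G : Set (Fin n → ℂ), ZClosed F → ZClosed G →
    S ⊆ F ∪ G → (S ⊆ F ∨ S ⊆ G)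

/-- Dimension of a subset of `ℂⁿ`: Krull dimension of the poset of irreducible
Zariski closed subsets contained in it. -/
def ZDim {n : ℕ} (S : Set (Fin n → ℂ)) : WithBot ℕ∞ :=
  Order.krullDim {T : Set (Fin n → ℂ) // ZClosed T ∧ ZIrred T ∧ T ⊆ S}

/-- Zariski closure in `ℂⁿ`. -/
def ZClosure {n : ℕ} (S : Set (Fin n → ℂ)) : Set (Fin n → ℂ) :=
  ⋂₀ {F | ZClosed F ∧ S ⊆ F}

/-- A property `P` of points of `ℂ^σ` holds generically if it holds on the
nonvanishing locus of some nonzero polynomial. -/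
def GenericProp {σ : Type} (P : (σ → ℂ) → Prop) : Prop :=
  ∃ p : MvPolynomial σ ℂ, p ≠ 0 ∧ ∀ x : σ → ℂ, MvPolynomial.eval x p ≠ 0 → P x

/-- `S ⊆ ℂⁿ` (of dimension `d`) has degree `k`: a generic affine-linear subspace of
codimension `d` meets `S` in exactly `k` points. -/
def HasVarietyDegree {n : ℕ} (S : Set (Fin n → ℂ)) (d k : ℕ) : Prop :=
  GenericProp (σ := Fin d × Option (Fin n)) fun c =>
    ({x ∈ S | ∀ j : Fin d, c (j, none) + ∑ i : Fin n, c (j, some i) * x i = 0}).ncard = k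

/-- The parametrization `ψ_{A,β}` with scaling vector `β`. -/
def psiBeta {d n : ℕ} (A : Matrix (Fin d) (Fin n) ℤ) (β : Fin n → ℂ) (v : Fin d → ℂ) :
    Fin n → ℂ :=
  fun ℓ => (β ℓ * ∏ k, v k ^ (A k ℓ) + (β ℓ)⁻¹ * ∏ k, v k ^ (-(A k ℓ))) / 2

/-- The toric Jacobi matrix `J_{A,b}(v) = ½ A · diag(β_ℓ v^{a_ℓ} - β_ℓ⁻¹ v^{-a_ℓ}) · Aᵀ`. -/
def toricJac {d n : ℕ} (A : Matrix (Fin d) (Fin n) ℤ) (β : Fin n → ℂ) (v : Fin d → ℂ) :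
    Matrix (Fin d) (Fin d) ℂ :=
  fun j k => (1 / 2 : ℂ) * ∑ ℓ, (A j ℓ : ℂ) *
    (β ℓ * ∏ k', v k' ^ (A k' ℓ) - (β ℓ)⁻¹ * ∏ k', v k' ^ (-(A k' ℓ))) * (A k ℓ : ℂ)

/-- The incidence variety `W_{A,b} = {(v,ω) : A ψ_{A,b}(v) = ω}`. -/
def Wset {d n : ℕ} (A : Matrix (Fin d) (Fin n) ℤ) (β : Fin n → ℂ) :
    Set ((Fin d → ℂ) × (Fin d → ℂ)) :=
  {p | (∀ k, p.1 k ≠ 0) ∧ ∀ i, ∑ ℓ, (A i ℓ : ℂ) * psiBeta A β p.1 ℓ = p.2 i}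

/-- The Lissajous discriminant `∇_{A,b}`, the Zariski closure of the branch locus. -/
def discLocus {d n : ℕ} (A : Matrix (Fin d) (Fin n) ℤ) (β : Fin n → ℂ) :
    Set (Fin d → ℂ) :=
  ZClosure {ω | ∃ v : Fin d → ℂ, (v, ω) ∈ Wset A β ∧ (toricJac A β v).det = 0}

/-- The projection `pr_ω : W → ℂ^d` has degree `e`: generic fibers have `e` points. -/
def HasProjDegree {d : ℕ} (W : Set ((Fin d → ℂ) × (Fin d → ℂ))) (e : ℕ) : Prop :=
  ∃ U : Set (Fin d → ℂ), ZClosed U ∧ U ≠ Set.univ ∧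
    ∀ ω ∉ U, ({v | (v, ω) ∈ W}).ncard = e

section Aux
open Matrix Finset

theorem auxdet (d n : ℕ) (A : Matrix (Fin d) (Fin n) ℚ) (h : A.rank = d) : (A * Aᵀ).det ≠ 0 := by
  have h2 : (A * Aᵀ).rank = d := by rw [Matrix.rank_self_mul_transpose]; exact h
  intro hdet
  obtain ⟨v, hv, hmv⟩ := (Matrix.exists_mulVec_eq_zero_iff.2 hdet)
  have hsurj : Function.Surjective (A * Aᵀ).mulVecLin := by
    rw [← LinearMap.range_eq_top]
    apply Submodule.eq_top_of_finrank_eq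
    rw [← Matrix.rank, h2]
    simp [Module.finrank_fintype_fun_eq_card]
  have hinj : Function.Injective (A * Aᵀ).mulVecLin :=
    (LinearMap.injective_iff_surjective).2 hsurj
  apply hv
  have : (A * Aᵀ).mulVecLin v = (A * Aᵀ).mulVecLin 0 := by
    rw [Matrix.mulVecLin_apply, Matrix.mulVecLin_apply, Matrix.mulVec_zero]; exact hmv
  exact hinj this

theorem part2 {d n : ℕ} (A : Matrix (Fin d) (Fin n) ℤ) :
    (toricJac A (fun _ => -Complex.I) (fun _ => 1)).det =
      Matrix.det (Matrix.of fun j k : Fin d =>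
        -Complex.I * ∑ ℓ, (A j ℓ : ℂ) * (A k ℓ : ℂ)) := by
  congr 1
  ext j k
  simp only [toricJac, Matrix.of_apply, _root_.one_zpow, Finset.prod_const_one, mul_one]
  rw [Finset.mul_sum, Finset.mul_sum]
  apply Finset.sum_congr rfl
  intro ℓ _
  have : (-Complex.I)⁻¹ = Complex.I := by
    rw [inv_neg, Complex.inv_I]; ring
  rw [this]
  ring

theorem part3 {d n : ℕ} (A : Matrix (Fin d) (Fin n) ℤ)
    (hrank : (A.map fun z => (z : ℚ)).rank = d) :
    Matrix.det (Matrix.of fun j k : Fin d =>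
        -Complex.I * ∑ ℓ, (A j ℓ : ℂ) * (A k ℓ : ℂ)) ≠ 0 := by
  set Aq : Matrix (Fin d) (Fin n) ℚ := A.map fun z => (z : ℚ) with hAq
  have hBq : (Aq * Aqᵀ).det ≠ 0 := auxdet d n Aq hrank
  have hM : (Matrix.of fun j k : Fin d => -Complex.I * ∑ ℓ, (A j ℓ : ℂ) * (A k ℓ : ℂ))
      = (-Complex.I) • ((Aq * Aqᵀ).map (algebraMap ℚ ℂ)) := by
    ext j k
    simp only [Matrix.of_apply, Matrix.smul_apply, Matrix.map_apply, Matrix.mul_apply,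
      Matrix.transpose_apply, hAq, smul_eq_mul]
    rw [map_sum]
    simp only [_root_.map_mul, algebraMap_int_eq, eq_intCast, Rat.cast_intCast, eq_ratCast]
  rw [hM, Matrix.det_smul]
  have : ((Aq * Aqᵀ).map (algebraMap ℚ ℂ)).det = algebraMap ℚ ℂ ((Aq * Aqᵀ).det) :=
    (RingHom.map_det (algebraMap ℚ ℂ) (Aq * Aqᵀ)).symm
  rw [this]
  apply mul_ne_zero
  · exact pow_ne_zero _ (neg_ne_zero.2 Complex.I_ne_zero)
  · exact (map_ne_zero (algebraMap ℚ ℂ)).2 hBq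

abbrev Gnd (n d : ℕ) := (Fin n ⊕ Fin d) → ℤ
abbrev Rng (n d : ℕ) := AddMonoidAlgebra ℂ (Gnd n d)

def mhom {n d : ℕ} (u : Fin n ⊕ Fin d → ℂˣ) : Multiplicative (Gnd n d) →* ℂ where
  toFun m := ∏ j, ((u j : ℂ) ^ (Multiplicative.toAdd m j))
  map_one' := by simp
  map_mul' x y := by
    simp only [← Finset.prod_mul_distrib]
    apply Finset.prod_congr rfl
    intro j _
    have : Multiplicative.toAdd (x * y) j = Multiplicative.toAdd x j + Multiplicative.toAdd y j := rfl
    rw [this]; exact zpow_add₀ (Units.ne_zero (u j)) _ _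

def evalR {n d : ℕ} (u : Fin n ⊕ Fin d → ℂˣ) : Rng n d →ₐ[ℂ] ℂ :=
  AddMonoidAlgebra.lift ℂ ℂ (Gnd n d) (mhom u)

theorem evalR_single {n d : ℕ} (u : Fin n ⊕ Fin d → ℂˣ) (m : Gnd n d) (c : ℂ) :
    evalR u (AddMonoidAlgebra.single m c) = c * ∏ j, ((u j : ℂ) ^ (m j)) := by
  rw [evalR, AddMonoidAlgebra.lift_single]
  simp [mhom, smul_eq_mul]

section elems
variable {d n : ℕ} (A : Matrix (Fin d) (Fin n) ℤ)

def expβ (ℓ : Fin n) : Gnd n d := Sum.elim (Pi.single ℓ 1) (fun k' => A k' ℓ)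

def Fel (i : Fin d) : Rng n d :=
  ∑ ℓ, (AddMonoidAlgebra.single (expβ A ℓ) ((A i ℓ : ℂ)/2) + AddMonoidAlgebra.single (-(expβ A ℓ)) ((A i ℓ : ℂ)/2))

def Vel (k : Fin d) : Rng n d := AddMonoidAlgebra.single (Sum.elim 0 (Pi.single k 1)) 1

def Bel (g : Fin n → ℤ) : Rng n d := AddMonoidAlgebra.single (Sum.elim g 0) 1

theorem prod_units_elim (u : Fin n ⊕ Fin d → ℂˣ) (m : Gnd n d) :
    ∏ j, ((u j : ℂ) ^ (m j)) =
      (∏ ℓ, ((u (Sum.inl ℓ) : ℂ) ^ (m (Sum.inl ℓ)))) *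
      (∏ i, ((u (Sum.inr i) : ℂ) ^ (m (Sum.inr i)))) := by
  rw [Fintype.prod_sum_type]

theorem evalR_Fel (u : Fin n ⊕ Fin d → ℂˣ) (i : Fin d) :
    evalR u (Fel A i) = ∑ ℓ, (A i ℓ : ℂ) *
      psiBeta A (fun ℓ => (u (Sum.inl ℓ) : ℂ)) (fun k => (u (Sum.inr k) : ℂ)) ℓ := by
  rw [Fel, map_sum]
  apply Finset.sum_congr rfl
  intro ℓ _
  rw [_root_.map_add, evalR_single, evalR_single, prod_units_elim, prod_units_elim]
  have h1 : ∏ ℓ', ((u (Sum.inl ℓ') : ℂ) ^ (expβ A ℓ (Sum.inl ℓ'))) = (u (Sum.inl ℓ) : ℂ) := by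
    rw [Fintype.prod_eq_single ℓ]
    · simp [expβ]
    · intro ℓ' hne
      simp [expβ, Pi.single_apply, hne]
  have h2 : ∏ ℓ', ((u (Sum.inl ℓ') : ℂ) ^ ((-(expβ A ℓ)) (Sum.inl ℓ'))) =
      ((u (Sum.inl ℓ) : ℂ))⁻¹ := by
    rw [Fintype.prod_eq_single ℓ]
    · simp [expβ, _root_.zpow_neg]
    · intro ℓ' hne
      simp [expβ, Pi.single_apply, hne]
  rw [h1, h2]
  simp only [expβ, Sum.elim_inr, Pi.neg_apply, psiBeta]
  ring

theorem evalR_Vel (u : Fin n ⊕ Fin d → ℂˣ) (k : Fin d) :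
    evalR u (Vel k) = (u (Sum.inr k) : ℂ) := by
  rw [Vel, evalR_single, prod_units_elim]
  have h1 : ∏ ℓ', ((u (Sum.inl ℓ') : ℂ) ^ ((Sum.elim (0 : Fin n → ℤ) (Pi.single k 1)) (Sum.inl ℓ'))) = 1 := by
    simp
  have h2 : ∏ i, ((u (Sum.inr i) : ℂ) ^ ((Sum.elim (0 : Fin n → ℤ) (Pi.single k 1)) (Sum.inr i))) = (u (Sum.inr k) : ℂ) := by
    rw [Fintype.prod_eq_single k]
    · simp
    · intro i hne
      simp [Pi.single_apply, hne]
  rw [h1, h2, one_mul, one_mul]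

theorem evalR_Bel (u : Fin n ⊕ Fin d → ℂˣ) (g : Fin n → ℤ) :
    evalR u (Bel g) = ∏ ℓ, ((u (Sum.inl ℓ) : ℂ) ^ (g ℓ)) := by
  rw [Bel, evalR_single, prod_units_elim]
  simp

end elems

section bdd
variable {d n : ℕ}

def Bdd (b : (Fin n ⊕ Fin d) → ℕ) (f : Rng n d) : Prop :=
  ∀ m ∈ f.coeff.support, ∀ j, |m j| ≤ (b j : ℤ)

theorem Bdd.mono {b b' : (Fin n ⊕ Fin d) → ℕ} {f : Rng n d} (h : Bdd b f)
    (hb : ∀ j, b j ≤ b' j) : Bdd b' f :=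
  fun m hm j => (h m hm j).trans (by exact_mod_cast hb j)

theorem Bdd_single {b : (Fin n ⊕ Fin d) → ℕ} {m : Gnd n d} (c : ℂ)
    (h : ∀ j, |m j| ≤ (b j : ℤ)) : Bdd b (AddMonoidAlgebra.single m c : Rng n d) := by
  intro m' hm' j
  rw [AddMonoidAlgebra.coeff_single] at hm'
  have := Finsupp.support_single_subset hm'
  simp only [Finset.mem_singleton] at this
  subst this; exact h j

theorem Bdd_add {b : (Fin n ⊕ Fin d) → ℕ} {f g : Rng n d} (hf : Bdd b f) (hg : Bdd b g) :
    Bdd b (f + g) := by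
  intro m hm j
  have := Finsupp.support_add (g₁ := f.coeff) (g₂ := g.coeff) hm
  rw [Finset.mem_union] at this
  rcases this with h | h
  · exact hf m h j
  · exact hg m h j

theorem Bdd_zero (b : (Fin n ⊕ Fin d) → ℕ) : Bdd b (0 : Rng n d) := by
  intro m hm j
  simp at hm

theorem Bdd_sum {ι : Type*} (s : Finset ι) (b : (Fin n ⊕ Fin d) → ℕ) (f : ι → Rng n d)
    (h : ∀ i ∈ s, Bdd b (f i)) : Bdd b (∑ i ∈ s, f i) := by
  classical
  induction s using Finset.induction_on with
  | empty => simpa using Bdd_zero b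
  | insert _ _ hx ih =>
    rw [Finset.sum_insert hx]
    exact Bdd_add (h _ (Finset.mem_insert_self _ _))
      (ih fun i hi => h i (Finset.mem_insert_of_mem hi))

theorem Bdd_mul {b1 b2 : (Fin n ⊕ Fin d) → ℕ} {f g : Rng n d} (hf : Bdd b1 f) (hg : Bdd b2 g) :
    Bdd (b1 + b2) (f * g) := by
  classical
  intro m hm j
  have hsub := AddMonoidAlgebra.support_coeff_mul_subset f g hm
  rw [Finset.mem_add] at hsub
  obtain ⟨m1, hm1, m2, hm2, rfl⟩ := hsub
  have := abs_add_le (m1 j) (m2 j)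
  have h1 := hf m1 hm1 j
  have h2 := hg m2 hm2 j
  simp only [Pi.add_apply, Nat.cast_add]
  calc |m1 j + m2 j| ≤ |m1 j| + |m2 j| := abs_add_le _ _
    _ ≤ (b1 j : ℤ) + (b2 j : ℤ) := add_le_add h1 h2

theorem Bdd_pow {b : (Fin n ⊕ Fin d) → ℕ} {f : Rng n d} (hf : Bdd b f) (e : ℕ) :
    Bdd (fun j => e * b j) (f ^ e) := by
  induction e with
  | zero =>
    intro m hm j
    rw [pow_zero] at hm
    have : m ∈ (Finsupp.single (0 : Gnd n d) (1:ℂ)).support := hm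
    have := Finsupp.support_single_subset this
    simp only [Finset.mem_singleton] at this
    subst this; simp
  | succ e ih =>
    rw [pow_succ]
    have := Bdd_mul ih hf
    exact this.mono fun j => by simp [Nat.succ_mul, add_comm]

end bdd

section main
variable {d n : ℕ} (A : Matrix (Fin d) (Fin n) ℤ)

def Mbd : ℕ := Finset.univ.sup (fun p : Fin d × Fin n => (A p.1 p.2).natAbs)

theorem Mbd_le (k : Fin d) (ℓ : Fin n) : |A k ℓ| ≤ (Mbd A : ℤ) := by
  rw [Int.abs_eq_natAbs]
  exact_mod_cast Finset.le_sup (f := fun p : Fin d × Fin n => (A p.1 p.2).natAbs)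
    (Finset.mem_univ (k, ℓ))

def Nbd : ℕ := 3 ^ n * (2 * Mbd A * d + 2) ^ d

def Nbd' : ℕ := 2 * d * Nbd A

def Bnd : (Fin n ⊕ Fin d) → ℕ :=
  Sum.elim (fun _ => Nbd' A + d * Nbd A) (fun _ => (Mbd A * d + 1) * Nbd A)

theorem Bdd_Fel (i : Fin d) : Bdd (Sum.elim (fun _ => 1) (fun _ => Mbd A) : (Fin n ⊕ Fin d) → ℕ) (Fel A i) := by
  apply Bdd_sum
  intro ℓ _
  apply Bdd_add
  · apply Bdd_single
    intro j
    rcases j with ℓ' | k'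
    · simp only [expβ, Sum.elim_inl, Pi.single_apply]
      split <;> simp
    · simpa [expβ] using Mbd_le A k' ℓ
  · apply Bdd_single
    intro j
    rcases j with ℓ' | k'
    · simp only [expβ, Pi.neg_apply, Sum.elim_inl, abs_neg, Pi.single_apply]
      split <;> simp
    · simpa [expβ] using Mbd_le A k' ℓ

theorem Bdd_Vel (k : Fin d) : Bdd (Sum.elim (fun _ => 0) (fun _ => 1) : (Fin n ⊕ Fin d) → ℕ) (Vel k : Rng n d) := by
  apply Bdd_single
  intro j
  rcases j with ℓ' | k'
  · simp
  · simp only [Sum.elim_inr, Pi.single_apply]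
    split <;> simp

theorem Bdd_Bel {g : Fin n → ℤ} {N' : ℕ} (hg : ∀ ℓ, |g ℓ| ≤ (N' : ℤ)) :
    Bdd (Sum.elim (fun _ => N') (fun _ => 0) : (Fin n ⊕ Fin d) → ℕ) (Bel g : Rng n d) := by
  apply Bdd_single
  intro j
  rcases j with ℓ' | k'
  · simpa using hg ℓ'
  · simp

end main

section phi
variable {d n : ℕ} (A : Matrix (Fin d) (Fin n) ℤ) (k : Fin d)

abbrev Idx (n d : ℕ) (A : Matrix (Fin d) (Fin n) ℤ) :=
  (Fin n → Fin (Nbd' A + 1)) × (Fin d → Fin (Nbd A + 1)) × Fin (Nbd A + 1)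

def Phi (x : Idx n d A) : Rng n d :=
  Bel (fun ℓ => ((x.1 ℓ : ℕ) : ℤ)) * (∏ i, (Fel A i) ^ (x.2.1 i : ℕ)) * (Vel k) ^ (x.2.2 : ℕ)

theorem Bdd_Phi (x : Idx n d A) : Bdd (Bnd A) (Phi A k x) := by
  have hB : Bdd (Sum.elim (fun _ => Nbd' A) (fun _ => 0) : (Fin n ⊕ Fin d) → ℕ)
      (Bel (fun ℓ => ((x.1 ℓ : ℕ) : ℤ)) : Rng n d) := by
    apply Bdd_Bel
    intro ℓ
    have := (x.1 ℓ).is_le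
    simp only [abs_of_nonneg (Int.natCast_nonneg _)]
    exact_mod_cast this
  have hF : Bdd (Sum.elim (fun _ => d * Nbd A) (fun _ => Mbd A * d * Nbd A) : (Fin n ⊕ Fin d) → ℕ)
      (∏ i, (Fel A i) ^ (x.2.1 i : ℕ)) := by
    have step : ∀ i : Fin d, Bdd (Sum.elim (fun _ => Nbd A) (fun _ => Mbd A * Nbd A) : (Fin n ⊕ Fin d) → ℕ)
        ((Fel A i) ^ (x.2.1 i : ℕ)) := by
      intro i
      have h1 := Bdd_pow (Bdd_Fel A i) (x.2.1 i : ℕ)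
      apply h1.mono
      intro j
      rcases j with ℓ' | k'
      · simpa using Nat.le_of_lt_succ (x.2.1 i).isLt
      · simp only [Sum.elim_inr]
        calc (x.2.1 i : ℕ) * Mbd A ≤ Nbd A * Mbd A :=
              Nat.mul_le_mul_right _ (Nat.le_of_lt_succ (x.2.1 i).isLt)
          _ = Mbd A * Nbd A := Nat.mul_comm _ _
    -- product over Fin d
    have : ∀ (s : Finset (Fin d)), Bdd (Sum.elim (fun _ => s.card * Nbd A)
        (fun _ => s.card * (Mbd A * Nbd A)) : (Fin n ⊕ Fin d) → ℕ)
        (∏ i ∈ s, (Fel A i) ^ (x.2.1 i : ℕ)) := by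
      classical
      intro s
      induction s using Finset.induction_on with
      | empty =>
        simp only [Finset.prod_empty, Finset.card_empty, Nat.zero_mul]
        intro m hm j
        have : m ∈ (Finsupp.single (0 : Gnd n d) (1:ℂ)).support := hm
        have := Finsupp.support_single_subset this
        simp only [Finset.mem_singleton] at this
        subst this; simp
      | insert _ _ hx ih =>
        rename_i a s'
        rw [Finset.prod_insert hx, Finset.card_insert_of_notMem hx]
        have := Bdd_mul (step a) ih
        apply this.mono
        intro j
        rcases j with ℓ' | k' <;> simp [Nat.succ_mul, Nat.add_mul, Nat.add_comm]
    have := this Finset.univ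
    apply this.mono
    intro j
    rcases j with ℓ' | k' <;> simp [Finset.card_univ, Nat.mul_comm, Nat.mul_assoc, Nat.mul_left_comm]
  have hV : Bdd (Sum.elim (fun _ => 0) (fun _ => Nbd A) : (Fin n ⊕ Fin d) → ℕ)
      ((Vel k : Rng n d) ^ (x.2.2 : ℕ)) := by
    have := Bdd_pow (Bdd_Vel (n := n) k) (x.2.2 : ℕ)
    apply this.mono
    intro j
    rcases j with ℓ' | k'
    · simp
    · simpa using Nat.le_of_lt_succ x.2.2.isLt
  rw [Phi]
  have := Bdd_mul (Bdd_mul hB hF) hV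
  apply this.mono
  intro j
  rcases j with ℓ' | k'
  · simp [Bnd]
  · simp only [Pi.add_apply, Sum.elim_inr, Bnd]
    ring_nf
    omega
end phi

section card
variable {d n : ℕ} (A : Matrix (Fin d) (Fin n) ℤ) (k : Fin d)

def Box : Finset (Gnd n d) :=
  Fintype.piFinset (fun j => Finset.Icc (-(Bnd A j : ℤ)) (Bnd A j))

theorem support_Phi_subset (x : Idx n d A) : (Phi A k x).coeff.support ⊆ Box A := by
  intro m hm
  rw [Box, Fintype.mem_piFinset]
  intro j
  rw [Finset.mem_Icc, ← abs_le]
  exact Bdd_Phi A k x m hm j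

theorem card_Box : (Box A (n := n) (d := d)).card =
    (2 * (Nbd' A + d * Nbd A) + 1) ^ n * (2 * ((Mbd A * d + 1) * Nbd A) + 1) ^ d := by
  rw [Box, Fintype.card_piFinset]
  have hcard : ∀ j : Fin n ⊕ Fin d,
      (Finset.Icc (-(Bnd A j : ℤ)) (Bnd A j)).card = 2 * Bnd A j + 1 := by
    intro j
    rw [Int.card_Icc]
    omega
  rw [Fintype.prod_sum_type]
  simp only [hcard]
  simp only [Bnd, Sum.elim_inl, Sum.elim_inr, Finset.prod_const, Finset.card_univ,
    Fintype.card_fin]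

theorem card_Idx : Fintype.card (Idx n d A) =
    (Nbd' A + 1) ^ n * ((Nbd A + 1) ^ d * (Nbd A + 1)) := by
  simp [Fintype.card_fun]

theorem card_lt : (Box A (n := n) (d := d)).card < Fintype.card (Idx n d A) := by
  rw [card_Box, card_Idx]
  have hN' : Nbd' A = 2 * (d * Nbd A) := by rw [Nbd']; ring
  have h1 : 2 * (Nbd' A + d * Nbd A) + 1 ≤ 3 * (Nbd' A + 1) := by omega
  have h2 : 2 * ((Mbd A * d + 1) * Nbd A) + 1 ≤ (2 * Mbd A * d + 2) * (Nbd A + 1) := by nlinarith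
  calc (2 * (Nbd' A + d * Nbd A) + 1) ^ n * (2 * ((Mbd A * d + 1) * Nbd A) + 1) ^ d
      ≤ (3 * (Nbd' A + 1)) ^ n * ((2 * Mbd A * d + 2) * (Nbd A + 1)) ^ d :=
        Nat.mul_le_mul (Nat.pow_le_pow_left h1 n) (Nat.pow_le_pow_left h2 d)
    _ = (3 ^ n * (2 * Mbd A * d + 2) ^ d) * ((Nbd' A + 1) ^ n * (Nbd A + 1) ^ d) := by
        rw [Nat.mul_pow, Nat.mul_pow]; ring
    _ = Nbd A * ((Nbd' A + 1) ^ n * (Nbd A + 1) ^ d) := rfl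
    _ < (Nbd A + 1) * ((Nbd' A + 1) ^ n * (Nbd A + 1) ^ d) := by
        apply Nat.mul_lt_mul_of_lt_of_le (Nat.lt_succ_self _) le_rfl
        positivity
    _ = (Nbd' A + 1) ^ n * ((Nbd A + 1) ^ d * (Nbd A + 1)) := by ring

theorem exists_relation : ∃ c : Idx n d A → ℂ,
    (∑ x, c x • Phi A k x) = 0 ∧ ∃ x, c x ≠ 0 := by
  rw [← Fintype.not_linearIndependent_iff]
  intro hli
  classical
  set s : Finset (Rng n d) := (Box A).image (fun m => (AddMonoidAlgebra.single m (1:ℂ) : Rng n d)) with hs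
  have hmem : ∀ x : Idx n d A, Phi A k x ∈ Submodule.span ℂ (s : Set (Rng n d)) := by
    intro x
    have hsupp := support_Phi_subset A k x
    have hrepr : Phi A k x = ∑ m ∈ (Phi A k x).coeff.support,
        (Phi A k x).coeff m • (AddMonoidAlgebra.single m (1:ℂ) : Rng n d) := by
      conv_lhs => rw [← AddMonoidAlgebra.sum_coeff_single (Phi A k x)]
      rw [Finsupp.sum]
      apply Finset.sum_congr rfl
      intro m _
      rw [AddMonoidAlgebra.smul_single, smul_eq_mul, mul_one]
    rw [hrepr]
    apply Submodule.sum_mem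
    intro m hm
    apply Submodule.smul_mem
    apply Submodule.subset_span
    exact Finset.mem_coe.2 (Finset.mem_image_of_mem _ (hsupp hm))
  -- restrict to the span
  let W := Submodule.span ℂ (s : Set (Rng n d))
  let Φ' : Idx n d A → W := fun x => ⟨Phi A k x, hmem x⟩
  have hli' : LinearIndependent ℂ Φ' := by
    apply LinearIndependent.of_comp W.subtype
    exact hli
  have hfin : FiniteDimensional ℂ W := FiniteDimensional.span_of_finite ℂ (Finset.finite_toSet s)
  have hcard := hli'.fintype_card_le_finrank
  have hrank : Module.finrank ℂ W ≤ s.card := by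
    have := finrank_span_finset_le_card (R := ℂ) s
    simpa [W, Set.finrank] using this
  have hsc : s.card ≤ (Box A).card := Finset.card_image_le
  have := card_lt A
  omega

end card

section poly
open MvPolynomial
variable {d n : ℕ} (A : Matrix (Fin d) (Fin n) ℤ)

abbrev GE (n d : ℕ) (A : Matrix (Fin d) (Fin n) ℤ) :=
  (Fin n → Fin (Nbd' A + 1)) × (Fin d → Fin (Nbd A + 1))

def expof (ge : GE n d A) : (Fin n ⊕ Fin d) →₀ ℕ :=
  Finsupp.equivFunOnFinite.symm (Sum.elim (fun ℓ => (ge.1 ℓ : ℕ)) (fun i => (ge.2 i : ℕ)))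

theorem expof_inj : Function.Injective (expof A) := by
  intro ge ge' h
  have h2 := Finsupp.equivFunOnFinite.symm.injective h
  obtain ⟨g, e⟩ := ge
  obtain ⟨g', e'⟩ := ge'
  simp only [Prod.mk.injEq]
  constructor
  · funext ℓ
    have := congrFun h2 (Sum.inl ℓ)
    simp only [Sum.elim_inl] at this
    exact Fin.val_injective this
  · funext i
    have := congrFun h2 (Sum.inr i)
    simp only [Sum.elim_inr] at this
    exact Fin.val_injective this

def Cp (c : Idx n d A → ℂ) (j : Fin (Nbd A + 1)) : MvPolynomial (Fin n ⊕ Fin d) ℂ :=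
  ∑ ge : GE n d A, MvPolynomial.monomial (expof A ge) (c (ge.1, ge.2, j))

theorem coeff_Cp (c : Idx n d A → ℂ) (j : Fin (Nbd A + 1)) (ge0 : GE n d A) :
    MvPolynomial.coeff (expof A ge0) (Cp A c j) = c (ge0.1, ge0.2, j) := by
  rw [Cp, MvPolynomial.coeff_sum]
  rw [Finset.sum_eq_single ge0]
  · rw [MvPolynomial.coeff_monomial, if_pos rfl]
  · intro ge _ hne
    rw [MvPolynomial.coeff_monomial, if_neg]
    exact fun h => hne (expof_inj A h)
  · intro h
    exact absurd (Finset.mem_univ _) h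

theorem eval_Cp (c : Idx n d A → ℂ) (j : Fin (Nbd A + 1)) (z : (Fin n ⊕ Fin d) → ℂ) :
    MvPolynomial.eval z (Cp A c j) = ∑ ge : GE n d A, c (ge.1, ge.2, j) *
      ((∏ ℓ, z (Sum.inl ℓ) ^ (ge.1 ℓ : ℕ)) * (∏ i, z (Sum.inr i) ^ (ge.2 i : ℕ))) := by
  rw [Cp, map_sum]
  apply Finset.sum_congr rfl
  intro ge _
  rw [MvPolynomial.eval_monomial]
  congr 1
  rw [Finsupp.prod_fintype _ _ (fun i => pow_zero _)]
  rw [Fintype.prod_sum_type]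
  congr 1

end poly

section key
variable {d n : ℕ}

theorem keyRel (A : Matrix (Fin d) (Fin n) ℤ) (k : Fin d) :
    ∃ q : MvPolynomial (Fin n ⊕ Fin d) ℂ, q ≠ 0 ∧
      ∀ z : (Fin n ⊕ Fin d) → ℂ, MvPolynomial.eval z q ≠ 0 → (∀ ℓ, z (Sum.inl ℓ) ≠ 0) →
        Set.Finite {t : ℂ | ∃ v : Fin d → ℂ, v k = t ∧ (∀ k', v k' ≠ 0) ∧
          (∀ i, ∑ ℓ, (A i ℓ : ℂ) * psiBeta A (fun j => z (Sum.inl j)) v ℓ = z (Sum.inr i))} := by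
  obtain ⟨c, hrel, x₀, hx₀⟩ := exists_relation A k
  refine ⟨Cp A c x₀.2.2, ?_, ?_⟩
  · intro hzero
    apply hx₀
    have := coeff_Cp A c x₀.2.2 (x₀.1, x₀.2.1)
    rw [hzero] at this
    simpa using this.symm
  · intro z hq hβ
    -- the univariate polynomial
    set P : Polynomial ℂ := ∑ j : Fin (Nbd A + 1),
      Polynomial.C (MvPolynomial.eval z (Cp A c j)) * Polynomial.X ^ (j : ℕ) with hP
    have hPne : P ≠ 0 := by
      intro h0
      apply hq
      have : P.coeff (x₀.2.2 : ℕ) = MvPolynomial.eval z (Cp A c x₀.2.2) := by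
        rw [hP, Polynomial.finset_sum_coeff]
        rw [Finset.sum_eq_single x₀.2.2]
        · simp
        · intro j _ hne
          rw [Polynomial.coeff_C_mul, Polynomial.coeff_X_pow, if_neg, mul_zero]
          exact fun h => hne (Fin.val_injective h.symm)
        · intro h; exact absurd (Finset.mem_univ _) h
      rw [h0] at this
      simpa using this.symm
    apply Set.Finite.subset (Polynomial.finite_setOf_isRoot hPne)
    rintro t ⟨v, rfl, hv, hfib⟩
    -- build units
    set u : Fin n ⊕ Fin d → ℂˣ := Sum.elim (fun ℓ => Units.mk0 (z (Sum.inl ℓ)) (hβ ℓ))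
      (fun k' => Units.mk0 (v k') (hv k')) with hu
    have hul : ∀ ℓ, (u (Sum.inl ℓ) : ℂ) = z (Sum.inl ℓ) := fun ℓ => rfl
    have hur : ∀ k', (u (Sum.inr k') : ℂ) = v k' := fun k' => rfl
    -- evaluate the relation
    have h0 : ∑ x : Idx n d A, c x * evalR u (Phi A k x) = 0 := by
      have := congrArg (evalR u) hrel
      rw [map_sum, map_zero] at this
      rw [← this]
      apply Finset.sum_congr rfl
      intro x _
      rw [map_smul, smul_eq_mul]
    have hev : ∀ x : Idx n d A, evalR u (Phi A k x) =
        ((∏ ℓ, z (Sum.inl ℓ) ^ (x.1 ℓ : ℕ)) * (∏ i, z (Sum.inr i) ^ (x.2.1 i : ℕ)))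
          * v k ^ (x.2.2 : ℕ) := by
      intro x
      rw [Phi, _root_.map_mul, _root_.map_mul, map_pow, evalR_Vel, hur]
      congr 2
      · rw [evalR_Bel]
        apply Finset.prod_congr rfl
        intro ℓ _
        rw [hul, zpow_natCast]
      · rw [map_prod]
        apply Finset.prod_congr rfl
        intro i _
        rw [map_pow, evalR_Fel]
        congr 1
        rw [← hfib i]
        apply Finset.sum_congr rfl
        intro ℓ _
        congr 1
    -- P.eval (v k) = the relation sum
    have hPeval : P.eval (v k) = ∑ x : Idx n d A, c x * evalR u (Phi A k x) := by
      rw [hP, Polynomial.eval_finset_sum]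
      simp only [Polynomial.eval_mul, Polynomial.eval_C, Polynomial.eval_pow, Polynomial.eval_X]
      calc ∑ j : Fin (Nbd A + 1), MvPolynomial.eval z (Cp A c j) * v k ^ (j : ℕ)
          = ∑ j : Fin (Nbd A + 1), ∑ ge : GE n d A, c (ge.1, ge.2, j) *
            (((∏ ℓ, z (Sum.inl ℓ) ^ (ge.1 ℓ : ℕ)) * (∏ i, z (Sum.inr i) ^ (ge.2 i : ℕ)))
              * v k ^ (j : ℕ)) := by
            apply Finset.sum_congr rfl
            intro j _
            rw [eval_Cp, Finset.sum_mul]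
            apply Finset.sum_congr rfl
            intro ge _
            ring
        _ = ∑ ge : GE n d A, ∑ j : Fin (Nbd A + 1), c (ge.1, ge.2, j) *
            (((∏ ℓ, z (Sum.inl ℓ) ^ (ge.1 ℓ : ℕ)) * (∏ i, z (Sum.inr i) ^ (ge.2 i : ℕ)))
              * v k ^ (j : ℕ)) := Finset.sum_comm
        _ = ∑ x : Idx n d A, c x * evalR u (Phi A k x) := by
            simp only [Fintype.sum_prod_type]
            apply Finset.sum_congr rfl; intro g _
            apply Finset.sum_congr rfl; intro e _
            apply Finset.sum_congr rfl; intro j _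
            rw [hev (g, e, j)]
    show P.IsRoot (v k)
    rw [Polynomial.IsRoot, hPeval, h0]

end key

end Aux

/-- Lemma 6.1: the toric Jacobian `det J_{A,b}` is not identically zero in `(β, v)`;
at `v = 𝟏`, `β = -i·𝟏` it equals `det(-i A Aᵀ) ≠ 0`; and for generic `β` and `ω` the
system `A ψ_{A,b}(v) = ω` has finitely many solutions `v ∈ (ℂ*)^d`. -/
theorem stmt15 {d n : ℕ} (A : Matrix (Fin d) (Fin n) ℤ)
    (hrank : (A.map fun z => (z : ℚ)).rank = d) :
    (∃ (β : Fin n → ℂ) (v : Fin d → ℂ), (∀ ℓ, β ℓ ≠ 0) ∧ (∀ k, v k ≠ 0) ∧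
      (toricJac A β v).det ≠ 0) ∧
    (toricJac A (fun _ => -Complex.I) (fun _ => 1)).det =
      Matrix.det (Matrix.of fun j k : Fin d =>
        -Complex.I * ∑ ℓ, (A j ℓ : ℂ) * (A k ℓ : ℂ)) ∧
    (toricJac A (fun _ => -Complex.I) (fun _ => 1)).det ≠ 0 ∧
    GenericProp (σ := Sum (Fin n) (Fin d)) (fun z =>
      Set.Finite {v : Fin d → ℂ | (∀ k, v k ≠ 0) ∧
        ∀ i, ∑ ℓ, (A i ℓ : ℂ) * psiBeta A (fun j => z (Sum.inl j)) v ℓ =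
          z (Sum.inr i)}) := by
  have h2 := part2 A
  have h3 := part3 A hrank
  have hdet : (toricJac A (fun _ => -Complex.I) (fun _ => 1)).det ≠ 0 := by
    rw [h2]; exact h3
  refine ⟨⟨fun _ => -Complex.I, fun _ => 1, fun ℓ => neg_ne_zero.2 Complex.I_ne_zero,
      fun k => one_ne_zero, hdet⟩, h2, hdet, ?_⟩
  -- generic finiteness
  choose q hq0 hqfin using fun k : Fin d => keyRel A k
  refine ⟨(∏ ℓ, MvPolynomial.X (Sum.inl ℓ)) * ∏ k, q k, ?_, ?_⟩
  · apply mul_ne_zero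
    · exact Finset.prod_ne_zero_iff.2 fun ℓ _ => MvPolynomial.X_ne_zero _
    · exact Finset.prod_ne_zero_iff.2 fun k _ => hq0 k
  · intro z hz
    rw [_root_.map_mul, map_prod, map_prod] at hz
    rcases mul_ne_zero_iff.1 hz with ⟨hz1, hz2⟩
    have hβ : ∀ ℓ, z (Sum.inl ℓ) ≠ 0 := by
      intro ℓ
      have := Finset.prod_ne_zero_iff.1 hz1 ℓ (Finset.mem_univ ℓ)
      simpa using this
    have hk : ∀ k, MvPolynomial.eval z (q k) ≠ 0 :=
      fun k => Finset.prod_ne_zero_iff.1 hz2 k (Finset.mem_univ k)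
    apply Set.Finite.subset (Set.Finite.pi (fun k => hqfin k z (hk k) hβ))
    rintro v ⟨hvne, hfib⟩
    intro k _
    exact ⟨v, rfl, hvne, hfib⟩
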